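/- Sauer–Shelah composition bound: if Y is a finite set of size m shattered by the k-fold union R^{k∪} of a family R of VC-dimension at most d (with m ≥ d ≥ 1), then 2^m ≤ (e·m/d)^{dk}. -/

import Mathlib

def Shatters {X : Type*} (R : Set (Set X)) (Y : Set X) : Prop :=
  ∀ Z ⊆ Y, ∃ S ∈ R, Y ∩ S = Z

noncomputable def VCdim {X : Type*} (R : Set (Set X)) : ℕ∞ :=
  ⨆ (Y : Finset X) (_ : Shatters R ↑Y), (Y.card : ℕ∞)

def kUnion {X : Type*} (R : Set (Set X)) (k : ℕ) : Set (Set X) :=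
  {T | ∃ f : Fin k → Set X, (∀ i, f i ∈ R) ∧ T = ⋃ i, f i}


lemma sum_choose_le_exp (d m : ℕ) (hd : 1 ≤ d) (hmd : d ≤ m) :
    ((∑ i ∈ Finset.Iic d, m.choose i : ℕ) : ℝ) ≤ (Real.exp 1 * m / d) ^ d := by
  have hm0 : 0 < m := lt_of_lt_of_le hd hmd
  have hdR : (0:ℝ) < d := by positivity
  have hmR : (0:ℝ) < m := by exact_mod_cast hm0
  set r : ℝ := d / m with hr
  have hr0 : 0 < r := by positivity
  have hr1 : r ≤ 1 := by
    rw [hr, div_le_one hmR]; exact_mod_cast hmd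
  have h1 : r ^ d * ((∑ i ∈ Finset.Iic d, m.choose i : ℕ) : ℝ)
      ≤ ∑ i ∈ Finset.Iic d, (m.choose i : ℝ) * r ^ i := by
    push_cast
    rw [Finset.mul_sum]
    refine Finset.sum_le_sum fun i hi => ?_
    rw [mul_comm]
    exact mul_le_mul_of_nonneg_left
      (pow_le_pow_of_le_one hr0.le hr1 (Finset.mem_Iic.mp hi)) (by positivity)
  have h2 : ∑ i ∈ Finset.Iic d, (m.choose i : ℝ) * r ^ i ≤ (1 + r) ^ m := by
    have heq : ∑ i ∈ Finset.Iic d, (m.choose i : ℝ) * r ^ i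
        = ∑ i ∈ Finset.Iic d, r ^ i * 1 ^ (m - i) * (m.choose i : ℝ) :=
      Finset.sum_congr rfl fun i _ => by ring
    rw [heq, add_comm, add_pow]
    refine Finset.sum_le_sum_of_subset_of_nonneg ?_ (fun i _ _ => by positivity)
    intro i hi
    simp only [Finset.mem_Iic] at hi
    exact Finset.mem_range.mpr (lt_of_le_of_lt (hi.trans hmd) (Nat.lt_succ_self m))
  have h3 : (1 + r) ^ m ≤ Real.exp d := by
    calc (1 + r) ^ m ≤ (Real.exp r) ^ m := by
          refine pow_le_pow_left₀ (by positivity) ?_ m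
          rw [add_comm]; exact Real.add_one_le_exp r
      _ = Real.exp (m * r) := (Real.exp_nat_mul r m).symm
      _ = Real.exp d := by
          congr 1
          rw [hr]; field_simp [hmR.ne']
  have key : r ^ d * ((∑ i ∈ Finset.Iic d, m.choose i : ℕ) : ℝ) ≤ Real.exp d :=
    h1.trans (h2.trans h3)
  have hrd : 0 < r ^ d := by positivity
  rw [← le_div_iff₀' hrd] at key
  refine key.trans_eq ?_
  have hexp : Real.exp (d:ℝ) = Real.exp 1 ^ d := by
    rw [← Real.exp_nat_mul]; norm_num
  rw [hr]
  field_simp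
  have e1 : (d:ℝ) ^ d * ((d:ℝ)⁻¹) ^ d = 1 := by rw [← mul_pow, mul_inv_cancel₀ hdR.ne', one_pow]
  have e2 : (m:ℝ) ^ d * ((m:ℝ)⁻¹) ^ d = 1 := by rw [← mul_pow, mul_inv_cancel₀ hmR.ne', one_pow]
  rw [hexp]
  linear_combination (-(Real.exp 1 ^ d * ((m:ℝ) ^ d * ((m:ℝ)⁻¹) ^ d))) * e1 - Real.exp 1 ^ d * e2

/-- Sauer–Shelah composition bound: if a set `Y` of size `m ≥ d ≥ 1` is
shattered by the `k`-fold union of a family of VC-dimension at most `d`, then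
`2^m ≤ (e·m/d)^{dk}`. -/
theorem sauer_shelah_composition {X : Type*} (R : Set (Set X)) (d k m : ℕ)
    (hd : 1 ≤ d) (hk : 1 ≤ k) (hmd : d ≤ m)
    (hVC : VCdim R ≤ (d : ℕ∞))
    (Y : Finset X) (hm : Y.card = m) (hY : Shatters (kUnion R k) ↑Y) :
    (2 : ℝ) ^ m ≤ (Real.exp 1 * m / d) ^ (d * k) := by
  classical
  set α := {x // x ∈ Y} with hα
  have hcard : Fintype.card α = m := by rw [Fintype.card_coe, hm]
  set 𝒜 : Finset (Finset α) :=
    Finset.univ.filter (fun A => ∃ S ∈ R, ∀ x : α, x ∈ A ↔ (x : X) ∈ S) with h𝒜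
  -- vcDim bound
  have hvc : 𝒜.vcDim ≤ d := by
    refine Finset.sup_le fun s hs => ?_
    have hsh : 𝒜.Shatters s := Finset.mem_shatterer.mp hs
    set s' : Finset X := s.image Subtype.val with hs'
    have hshat : Shatters R ↑s' := by
      intro Z hZ
      obtain ⟨u, hu, hsu⟩ := hsh (Finset.filter_subset (fun a : α => (a : X) ∈ Z) s)
      rw [h𝒜, Finset.mem_filter] at hu
      obtain ⟨-, S, hS, hiff⟩ := hu
      refine ⟨S, hS, ?_⟩
      ext x
      simp only [Set.mem_inter_iff, hs', Finset.coe_image, Set.mem_image,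
        Finset.mem_coe]
      constructor
      · rintro ⟨⟨a, ha, rfl⟩, hxS⟩
        have hau : a ∈ u := (hiff a).mpr hxS
        have : a ∈ s ∩ u := Finset.mem_inter.mpr ⟨ha, hau⟩
        rw [hsu, Finset.mem_filter] at this
        exact this.2
      · intro hxZ
        have hx' : x ∈ (s' : Set X) := hZ hxZ
        rw [hs'] at hx'
        simp only [Finset.coe_image, Set.mem_image, Finset.mem_coe] at hx'
        obtain ⟨a, ha, rfl⟩ := hx'
        have hat : a ∈ s.filter (fun a : α => (a : X) ∈ Z) :=
          Finset.mem_filter.mpr ⟨ha, hxZ⟩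
        rw [← hsu, Finset.mem_inter] at hat
        exact ⟨⟨a, ha, rfl⟩, (hiff a).mp hat.2⟩
    have hle : (s'.card : ℕ∞) ≤ (d : ℕ∞) := by
      refine le_trans ?_ hVC
      exact le_iSup₂ (f := fun (Y' : Finset X) (_ : Shatters R ↑Y') => (Y'.card : ℕ∞)) s' hshat
    have : s'.card ≤ d := by exact_mod_cast hle
    rwa [hs', Finset.card_image_of_injective _ Subtype.val_injective] at this
  -- trace count
  have hN1 : 𝒜.card ≤ ∑ i ∈ Finset.Iic d, m.choose i := by
    calc 𝒜.card ≤ 𝒜.shatterer.card := Finset.card_le_card_shatterer 𝒜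
      _ ≤ ∑ i ∈ Finset.Iic 𝒜.vcDim, (Fintype.card α).choose i :=
          Finset.card_shatterer_le_sum_vcDim
      _ ≤ ∑ i ∈ Finset.Iic d, m.choose i := by
          rw [hcard]
          exact Finset.sum_le_sum_of_subset (Finset.Iic_subset_Iic.mpr hvc)
  -- 2^m ≤ N^k
  have h2N : 2 ^ m ≤ 𝒜.card ^ k := by
    have hgood : ∀ A : Finset α, ∃ g : Fin k → Finset α, (∀ i, g i ∈ 𝒜) ∧
        A = Finset.univ.filter (fun a => ∃ i, a ∈ g i) := by
      intro A
      obtain ⟨T, hT, hYT⟩ := hY (Subtype.val '' (↑A : Set α))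
        (by rintro x ⟨a, -, rfl⟩; exact a.2)
      obtain ⟨f, hf, rfl⟩ := hT
      refine ⟨fun i => Finset.univ.filter (fun a : α => (a : X) ∈ f i), fun i => ?_, ?_⟩
      · rw [h𝒜, Finset.mem_filter]
        exact ⟨Finset.mem_univ _, f i, hf i, fun x => by simp⟩
      · ext a
        simp only [Finset.mem_filter, Finset.mem_univ, true_and]
        constructor
        · intro ha
          have : (a : X) ∈ Subtype.val '' (↑A : Set α) := ⟨a, ha, rfl⟩
          rw [← hYT] at this
          simpa using this.2
        · rintro ⟨i, hi⟩
          have : (a : X) ∈ (↑Y : Set X) ∩ ⋃ i, f i :=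
            ⟨a.2, Set.mem_iUnion.mpr ⟨i, hi⟩⟩
          rw [hYT] at this
          obtain ⟨b, hb, hba⟩ := this
          rwa [← Subtype.val_injective hba]
    choose g hg1 hg2 using hgood
    have hinj : Function.Injective (fun A : Finset α => fun i : Fin k => (⟨g A i, hg1 A i⟩ : {u // u ∈ 𝒜})) := by
      intro A B hAB
      have hg : g A = g B := funext fun i => congrArg Subtype.val (congrFun hAB i)
      rw [hg2 A, hg2 B, hg]
    have := Fintype.card_le_of_injective _ hinj
    simp only [Fintype.card_finset, Fintype.card_fun, Fintype.card_coe,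
      Fintype.card_fin, hcard, hm] at this
    exact this
  -- final chain
  have hNle : (𝒜.card : ℝ) ≤ (Real.exp 1 * m / d) ^ d :=
    le_trans (by exact_mod_cast hN1) (sum_choose_le_exp d m hd hmd)
  calc (2:ℝ) ^ m = ((2 ^ m : ℕ) : ℝ) := by push_cast; ring
    _ ≤ ((𝒜.card ^ k : ℕ) : ℝ) := by exact_mod_cast h2N
    _ = (𝒜.card : ℝ) ^ k := by push_cast; ring
    _ ≤ ((Real.exp 1 * m / d) ^ d) ^ k := pow_le_pow_left₀ (Nat.cast_nonneg _) hNle k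
    _ = (Real.exp 1 * m / d) ^ (d * k) := by rw [← pow_mul]
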